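/- arXiv:1006.5340 — 3 statements merged into one kernel-verified Lean document; each statement's English description precedes it below -/
import Mathlib

section
/- Let R, r > 0 and let u, f, g : ℝ → ℝ be functions such that u is twice continuously differentiable on an open set containing the closed interval [-(R+r), R+r] and f, g are continuous on [-(R+r), R+r]. Assume that for every t ∈ [-(R+r), R+r] one has f(t) ≤ g(t) + u''(t), u(t) ≥ 0, f(t) ≥ 0 and g(t) ≥ 0. Then ∫_{-R}^{R} f(t) dt ≤ ∫_{-(R+r)}^{R+r} g(t) dt + (4/r²)·( ∫_{-(R+r)}^{-R} u(t) dt + ∫_{R}^{R+r} u(t) dt ). -/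
open intervalIntegral MeasureTheory

lemma tent_lemma (x r C : ℝ) (hr : 0 < r) (v v' : ℝ → ℝ)
    (hv : ∀ t ∈ Set.Icc x (x + r), HasDerivAt v (v' t) t)
    (hv'c : ContinuousOn v' (Set.Icc x (x + r)))
    (hv0 : ∀ t ∈ Set.Icc x (x + r), 0 ≤ v t)
    (hC : ∀ t ∈ Set.Icc x (x + r), C ≤ v' t) :
    C ≤ (4 / r ^ 2) * ∫ t in x..(x + r), v t := by
  obtain ⟨m, hm_def⟩ : ∃ m : ℝ, m = x + r / 2 := ⟨_, rfl⟩
  have hxm : x ≤ m := by rw [hm_def]; linarith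
  have hmr : m ≤ x + r := by rw [hm_def]; linarith
  have hsub1 : Set.Icc x m ⊆ Set.Icc x (x + r) := Set.Icc_subset_Icc le_rfl hmr
  have hsub2 : Set.Icc m (x + r) ⊆ Set.Icc x (x + r) := Set.Icc_subset_Icc hxm le_rfl
  have hvc : ContinuousOn v (Set.Icc x (x + r)) :=
    fun t ht => (hv t ht).continuousAt.continuousWithinAt
  -- integrability
  have hint_v1 : IntervalIntegrable v volume x m :=
    (hvc.mono hsub1).intervalIntegrable_of_Icc hxm
  have hint_v2 : IntervalIntegrable v volume m (x + r) :=
    (hvc.mono hsub2).intervalIntegrable_of_Icc hmr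
  have hint_v'1 : IntervalIntegrable v' volume x m :=
    (hv'c.mono hsub1).intervalIntegrable_of_Icc hxm
  have hint_v'2 : IntervalIntegrable v' volume m (x + r) :=
    (hv'c.mono hsub2).intervalIntegrable_of_Icc hmr
  -- IBP on [x, m] with weight (t - x)
  have ibp1 : (∫ t in x..m, (t - x) * v' t)
      = (m - x) * v m - (x - x) * v x - ∫ t in x..m, 1 * v t := by
    apply intervalIntegral.integral_mul_deriv_eq_deriv_mul
    · intro t _; simpa using ((hasDerivAt_id t).sub_const x)
    · intro t ht
      exact hv t (hsub1 ((Set.uIcc_of_le hxm) ▸ ht))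
    · exact intervalIntegrable_const
    · exact hint_v'1
  -- IBP on [m, x+r] with weight (x + r - t)
  have ibp2 : (∫ t in m..(x + r), (x + r - t) * v' t)
      = (x + r - (x + r)) * v (x + r) - (x + r - m) * v m - ∫ t in m..(x + r), (-1) * v t := by
    apply intervalIntegral.integral_mul_deriv_eq_deriv_mul
    · intro t _
      simpa using ((hasDerivAt_id t).const_sub (x + r))
    · intro t ht
      exact hv t (hsub2 ((Set.uIcc_of_le hmr) ▸ ht))
    · exact intervalIntegrable_const
    · exact hint_v'2
  -- value of weight integrals
  have hw1 : (∫ t in x..m, (t - x)) = r ^ 2 / 8 := by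
    rw [intervalIntegral.integral_comp_sub_right (fun t => t) x, integral_id]
    rw [hm_def]; norm_num; ring
  have hw2 : (∫ t in m..(x + r), (x + r - t)) = r ^ 2 / 8 := by
    rw [intervalIntegral.integral_comp_sub_left (fun t => t) (x + r), integral_id]
    rw [hm_def]; norm_num; ring
  -- lower bounds via monotonicity
  have hmono1 : C * (r ^ 2 / 8) ≤ ∫ t in x..m, (t - x) * v' t := by
    have : (∫ t in x..m, C * (t - x)) ≤ ∫ t in x..m, (t - x) * v' t := by
      apply intervalIntegral.integral_mono_on hxm
      · exact (intervalIntegrable_const.mul_continuousOn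
          (by fun_prop : ContinuousOn (fun t : ℝ => t - x) (Set.uIcc x m)))
      · exact ((by fun_prop : ContinuousOn (fun t : ℝ => t - x) (Set.Icc x m)).mul
          (hv'c.mono hsub1)).intervalIntegrable_of_Icc hxm
      · intro t ht
        have h1 : 0 ≤ t - x := by linarith [ht.1]
        have h2 : C ≤ v' t := hC t (hsub1 ht)
        nlinarith
    rwa [intervalIntegral.integral_const_mul, hw1] at this
  have hmono2 : C * (r ^ 2 / 8) ≤ ∫ t in m..(x + r), (x + r - t) * v' t := by
    have : (∫ t in m..(x + r), C * (x + r - t)) ≤ ∫ t in m..(x + r), (x + r - t) * v' t := by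
      apply intervalIntegral.integral_mono_on hmr
      · exact (intervalIntegrable_const.mul_continuousOn
          (by fun_prop : ContinuousOn (fun t : ℝ => x + r - t) (Set.uIcc m (x + r))))
      · exact ((by fun_prop : ContinuousOn (fun t : ℝ => x + r - t) (Set.Icc m (x + r))).mul
          (hv'c.mono hsub2)).intervalIntegrable_of_Icc hmr
      · intro t ht
        have h1 : 0 ≤ x + r - t := by linarith [ht.2]
        have h2 : C ≤ v' t := hC t (hsub2 ht)
        nlinarith
    rwa [intervalIntegral.integral_const_mul, hw2] at this
  -- nonnegativity of integrals of v
  have hpos1 : 0 ≤ ∫ t in x..m, v t :=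
    intervalIntegral.integral_nonneg hxm (fun t ht => hv0 t (hsub1 ht))
  have hadd : (∫ t in x..m, v t) + (∫ t in m..(x + r), v t) = ∫ t in x..(x + r), v t :=
    intervalIntegral.integral_add_adjacent_intervals hint_v1 hint_v2
  have hone1 : (∫ t in x..m, 1 * v t) = ∫ t in x..m, v t := by simp
  have hone2 : (∫ t in m..(x + r), (-1) * v t) = - ∫ t in m..(x + r), v t := by
    simp [intervalIntegral.integral_neg]
  rw [hone1] at ibp1
  rw [hone2] at ibp2
  -- combine
  have hrr : 0 < r ^ 2 := by positivity
  have e1 : (m - x) * v m = r / 2 * v m := by rw [hm_def]; ring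
  have e2 : (x + r - m) * v m = r / 2 * v m := by rw [hm_def]; ring
  have e3 : (x - x) * v x = 0 := by ring
  have e4 : (x + r - (x + r)) * v (x + r) = 0 := by ring
  have e5 : C * (r ^ 2 / 4) = C * (r ^ 2 / 8) + C * (r ^ 2 / 8) := by ring
  have key : C * (r ^ 2 / 4) ≤ ∫ t in x..(x + r), v t := by
    linarith [hmono1, hmono2, ibp1, ibp2, hpos1, hadd, e1, e2, e3, e4, e5]
  have h4 : (0:ℝ) < 4 / r ^ 2 := by positivity
  calc C = (4 / r ^ 2) * (C * (r ^ 2 / 4)) := by field_simp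
    _ ≤ (4 / r ^ 2) * ∫ t in x..(x + r), v t :=
        mul_le_mul_of_nonneg_left key h4.le

/-- One-dimensional integrated mean-value inequality (lemma on differential
inequalities): if `f ≤ g + u''`, `u ≥ 0`, `f ≥ 0`, `g ≥ 0` on `[-(R+r), R+r]`,
then `∫_{-R}^{R} f ≤ ∫_{-(R+r)}^{R+r} g + (4/r²)(∫_{-(R+r)}^{-R} u + ∫_{R}^{R+r} u)`. -/
theorem integrated_mean_value_inequality
    (R r : ℝ) (hR : 0 < R) (hr : 0 < r)
    (u f g : ℝ → ℝ)
    (hu : ∃ s : Set ℝ, IsOpen s ∧ Set.Icc (-(R + r)) (R + r) ⊆ s ∧ ContDiffOn ℝ 2 u s)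
    (hf : ContinuousOn f (Set.Icc (-(R + r)) (R + r)))
    (hg : ContinuousOn g (Set.Icc (-(R + r)) (R + r)))
    (hfg : ∀ t ∈ Set.Icc (-(R + r)) (R + r), f t ≤ g t + deriv (deriv u) t)
    (hu0 : ∀ t ∈ Set.Icc (-(R + r)) (R + r), 0 ≤ u t)
    (hf0 : ∀ t ∈ Set.Icc (-(R + r)) (R + r), 0 ≤ f t)
    (hg0 : ∀ t ∈ Set.Icc (-(R + r)) (R + r), 0 ≤ g t) :
    (∫ t in (-R)..R, f t) ≤
      (∫ t in (-(R + r))..(R + r), g t) +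
        (4 / r ^ 2) * ((∫ t in (-(R + r))..(-R), u t) + ∫ t in R..(R + r), u t) := by
  obtain ⟨s, hs_open, hs_sub, hcd⟩ := hu
  have hI1 : -(R + r) ≤ -R := by linarith
  have hI2 : -R ≤ R := by linarith
  have hI3 : R ≤ R + r := by linarith
  -- derivative facts
  have hderiv1 : ∀ t ∈ s, HasDerivAt u (deriv u t) t := fun t ht =>
    ((hcd.contDiffAt (hs_open.mem_nhds ht)).differentiableAt (by norm_num)).hasDerivAt
  have hcd' : ContDiffOn ℝ 1 (deriv u) s := hcd.deriv_of_isOpen hs_open (by norm_num)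
  have hderiv2 : ∀ t ∈ s, HasDerivAt (deriv u) (deriv (deriv u) t) t := fun t ht =>
    ((hcd'.contDiffAt (hs_open.mem_nhds ht)).differentiableAt (by norm_num)).hasDerivAt
  have hu''c : ContinuousOn (deriv (deriv u)) s :=
    hcd'.continuousOn_deriv_of_isOpen hs_open (by norm_num)
  -- the basic inequality for arbitrary endpoints
  have key : ∀ a ∈ Set.Icc (-(R + r)) (-R), ∀ b ∈ Set.Icc R (R + r),
      (∫ t in (-R)..R, f t) ≤ (∫ t in (-(R + r))..(R + r), g t)
        + (deriv u b - deriv u a) := by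
    intro a ha b hb
    have hab0 : a ≤ -R := ha.2
    have hab1 : R ≤ b := hb.1
    have hab : a ≤ b := by linarith
    have hsubI : Set.Icc a b ⊆ Set.Icc (-(R + r)) (R + r) :=
      Set.Icc_subset_Icc ha.1 hb.2
    have hsubs : Set.Icc a b ⊆ s := hsubI.trans hs_sub
    have hfi : ∀ c d : ℝ, a ≤ c → c ≤ d → d ≤ b → IntervalIntegrable f volume c d :=
      fun c d h1 h2 h3 =>
        ((hf.mono ((Set.Icc_subset_Icc h1 h3).trans hsubI)).intervalIntegrable_of_Icc h2)
    have hgi : ∀ c d : ℝ, -(R + r) ≤ c → c ≤ d → d ≤ R + r → IntervalIntegrable g volume c d :=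
      fun c d h1 h2 h3 =>
        ((hg.mono (Set.Icc_subset_Icc h1 h3)).intervalIntegrable_of_Icc h2)
    -- step 1 : ∫_{-R}^R f ≤ ∫_a^b f
    have step1 : (∫ t in (-R)..R, f t) ≤ ∫ t in a..b, f t := by
      have e1 : (∫ t in a..(-R), f t) + (∫ t in (-R)..b, f t) = ∫ t in a..b, f t :=
        intervalIntegral.integral_add_adjacent_intervals
          (hfi a (-R) le_rfl hab0 (by linarith))
          (hfi (-R) b hab0 (by linarith) le_rfl)
      have e2 : (∫ t in (-R)..R, f t) + (∫ t in R..b, f t) = ∫ t in (-R)..b, f t :=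
        intervalIntegral.integral_add_adjacent_intervals
          (hfi (-R) R hab0 hI2 hab1)
          (hfi R b (by linarith) hab1 le_rfl)
      have p1 : 0 ≤ ∫ t in a..(-R), f t :=
        intervalIntegral.integral_nonneg hab0
          (fun t ht => hf0 t (hsubI ⟨ht.1, by linarith [ht.2]⟩))
      have p2 : 0 ≤ ∫ t in R..b, f t :=
        intervalIntegral.integral_nonneg hab1
          (fun t ht => hf0 t (hsubI ⟨by linarith [ht.1], ht.2⟩))
      linarith
    -- step 2 : ∫_a^b f ≤ ∫_a^b g + (u' b - u' a)
    have ftc : (∫ t in a..b, deriv (deriv u) t) = deriv u b - deriv u a := by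
      apply intervalIntegral.integral_eq_sub_of_hasDerivAt
      · intro t ht
        exact hderiv2 t (hsubs ((Set.uIcc_of_le hab) ▸ ht))
      · exact ((hu''c.mono hsubs).intervalIntegrable_of_Icc hab)
    have step2 : (∫ t in a..b, f t)
        ≤ (∫ t in a..b, g t) + (deriv u b - deriv u a) := by
      have hle : (∫ t in a..b, f t) ≤ ∫ t in a..b, (g t + deriv (deriv u) t) := by
        apply intervalIntegral.integral_mono_on hab (hfi a b le_rfl hab le_rfl)
        · exact (hgi a b ha.1 hab hb.2).add
            ((hu''c.mono hsubs).intervalIntegrable_of_Icc hab)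
        · exact fun t ht => hfg t (hsubI ht)
      rw [intervalIntegral.integral_add (hgi a b ha.1 hab hb.2)
        ((hu''c.mono hsubs).intervalIntegrable_of_Icc hab), ftc] at hle
      exact hle
    -- step 3 : ∫_a^b g ≤ ∫ over the full interval
    have step3 : (∫ t in a..b, g t) ≤ ∫ t in (-(R + r))..(R + r), g t := by
      have e1 : (∫ t in (-(R+r))..a, g t) + (∫ t in a..(R+r), g t)
          = ∫ t in (-(R+r))..(R+r), g t :=
        intervalIntegral.integral_add_adjacent_intervals
          (hgi (-(R+r)) a le_rfl ha.1 (by linarith [ha.2]))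
          (hgi a (R+r) ha.1 (by linarith) le_rfl)
      have e2 : (∫ t in a..b, g t) + (∫ t in b..(R+r), g t) = ∫ t in a..(R+r), g t :=
        intervalIntegral.integral_add_adjacent_intervals
          (hgi a b ha.1 hab hb.2)
          (hgi b (R+r) (by linarith [hb.1]) hb.2 le_rfl)
      have p1 : 0 ≤ ∫ t in (-(R+r))..a, g t :=
        intervalIntegral.integral_nonneg ha.1
          (fun t ht => hg0 t ⟨ht.1, by linarith [ht.2, ha.2]⟩)
      have p2 : 0 ≤ ∫ t in b..(R+r), g t :=
        intervalIntegral.integral_nonneg hb.2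
          (fun t ht => hg0 t ⟨by linarith [ht.1, hb.1], ht.2⟩)
      linarith
    linarith
  -- apply the tent lemma on the right interval, for every a
  have hsubR : Set.Icc R (R + r) ⊆ Set.Icc (-(R + r)) (R + r) :=
    Set.Icc_subset_Icc (by linarith) le_rfl
  have hsubL : Set.Icc (-(R + r)) (-R) ⊆ Set.Icc (-(R + r)) (R + r) :=
    Set.Icc_subset_Icc le_rfl (by linarith)
  set C := (∫ t in (-R)..R, f t) - (∫ t in (-(R + r))..(R + r), g t) with hC_def
  set B := (4 / r ^ 2) * ∫ t in R..(R + r), u t with hB_def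
  have hstep2 : ∀ a ∈ Set.Icc (-(R + r)) (-R), C - B ≤ -deriv u a := by
    intro a ha
    have htent : C + deriv u a ≤ B := by
      rw [hB_def]
      apply tent_lemma R r (C + deriv u a) hr u (deriv u)
      · exact fun t ht => hderiv1 t (hs_sub (hsubR ht))
      · exact (hcd'.continuousOn).mono ((Set.Subset.trans hsubR hs_sub))
      · exact fun t ht => hu0 t (hsubR ht)
      · intro t ht
        have := key a ha t ht
        rw [hC_def]; linarith
    linarith
  -- apply the tent lemma to u ∘ neg on the right interval
  have hleft : C - B ≤ (4 / r ^ 2) * ∫ t in (-(R + r))..(-R), u t := by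
    have hmem : ∀ t ∈ Set.Icc R (R + r), -t ∈ Set.Icc (-(R + r)) (-R) :=
      fun t ht => ⟨by linarith [ht.2], by linarith [ht.1]⟩
    have htent := tent_lemma R r (C - B) hr (fun t => u (-t)) (fun t => -deriv u (-t))
      (fun t ht => by
        have h1 : HasDerivAt u (deriv u (-t)) (-t) :=
          hderiv1 (-t) (hs_sub (hsubL (hmem t ht)))
        have h2 : HasDerivAt (fun t : ℝ => -t) (-1) t := by
          exact hasDerivAt_neg t
        have := HasDerivAt.comp t h1 h2
        simpa [Function.comp_def, mul_comm] using this)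
      (by
        have hcomp : ContinuousOn (fun t : ℝ => deriv u (-t)) (Set.Icc R (R + r)) :=
          (hcd'.continuousOn.mono (hsubL.trans hs_sub)).comp
            continuous_neg.continuousOn
            (fun t ht => hmem t ht)
        exact hcomp.neg)
      (fun t ht => hu0 (-t) (hsubL (hmem t ht)))
      (fun t ht => hstep2 (-t) (hmem t ht))
    rwa [intervalIntegral.integral_comp_neg u] at htent
  have hfinal : (4 / r ^ 2) * ((∫ t in (-(R + r))..(-R), u t) + ∫ t in R..(R + r), u t)
      = (4 / r ^ 2) * (∫ t in (-(R + r))..(-R), u t) + B := by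
    rw [hB_def]; ring
  rw [hC_def] at hleft
  linarith
end

section
/- Let c ≥ 0 and let u : ℝ → ℝ be twice continuously differentiable, 1-periodic (u(t+1) = u(t) for all t), with u(t) ≥ 0 and u''(t) ≥ -c·u(t) for every t ∈ ℝ. Then sup_{t ∈ ℝ} u(t) ≤ 4·(c + 8)·∫_0^1 u(t) dt. -/
set_option maxHeartbeats 800000 in
/-- Periodic mean-value inequality for nonnegative subsolutions of `u'' + c·u ≥ 0`
on the circle `S¹ = ℝ/ℤ`: `sup u ≤ 4·(c + 8)·∫_0^1 u`. -/
theorem periodic_mean_value_inequality_subsolution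
    (c : ℝ) (hc : 0 ≤ c) (u : ℝ → ℝ)
    (hu : ContDiff ℝ 2 u) (hper : Function.Periodic u 1)
    (hu0 : ∀ t, 0 ≤ u t)
    (hu'' : ∀ t, -c * u t ≤ deriv (deriv u) t) :
    (⨆ t, u t) ≤ 4 * (c + 8) * ∫ t in (0 : ℝ)..1, u t := by
  have hcont : Continuous u := hu.continuous
  -- max on [0,1]
  obtain ⟨t₀, ht₀mem, ht₀⟩ := (isCompact_Icc (a := (0:ℝ)) (b := 1)).exists_isMaxOn
    (Set.nonempty_Icc.2 zero_le_one) hcont.continuousOn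
  set M := u t₀ with hM
  have hmax : ∀ t, u t ≤ M := by
    intro t
    have h1 : u (t - (⌊t⌋ : ℝ) * 1) = u t := hper.sub_int_mul_eq ⌊t⌋
    rw [← h1]
    refine ht₀ ⟨?_, ?_⟩
    · have h2 := Int.floor_le t
      simp only [mul_one]
      linarith
    · have h2 := Int.lt_floor_add_one t
      simp only [mul_one]
      linarith
  have hM0 : 0 ≤ M := hu0 t₀
  have hdu : Differentiable ℝ u := hu.differentiable (by norm_num)
  have hdu' : Differentiable ℝ (deriv u) := by
    have h2 : ContDiff ℝ ((1 : ℕ∞) + 1) u := by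
      convert hu using 2
      norm_num
    exact ((contDiff_succ_iff_deriv).mp h2).2.2.differentiable (by norm_num)
  have hd0 : deriv u t₀ = 0 := by
    have hloc : IsLocalMax u t₀ := Filter.Eventually.of_forall hmax
    exact hloc.deriv_eq_zero
  -- define g and its derivative v
  set g : ℝ → ℝ := fun t => u t + c * M / 2 * (t - t₀) ^ 2 with hg
  set v : ℝ → ℝ := fun t => deriv u t + c * M * (t - t₀) with hv
  have hgd : ∀ t, HasDerivAt g (v t) t := by
    intro t
    have h1 : HasDerivAt u (deriv u t) t := (hdu t).hasDerivAt
    have h2 : HasDerivAt (fun t => c * M / 2 * (t - t₀) ^ 2)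
        (c * M / 2 * (2 * (t - t₀) ^ 1 * 1)) t :=
      (((hasDerivAt_id t).sub_const t₀).pow 2).const_mul (c * M / 2)
    have := h1.add h2
    exact this.congr_deriv (by simp only [hv]; ring)
  have hvd : ∀ t, HasDerivAt v (deriv (deriv u) t + c * M) t := by
    intro t
    have h1 : HasDerivAt (deriv u) (deriv (deriv u) t) t := (hdu' t).hasDerivAt
    have h2 : HasDerivAt (fun t => c * M * (t - t₀)) (c * M * 1) t :=
      ((hasDerivAt_id t).sub_const t₀).const_mul (c * M)
    have := h1.add h2
    exact this.congr_deriv (by ring)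
  have hvmono : Monotone v := by
    apply monotone_of_deriv_nonneg (fun t => (hvd t).differentiableAt)
    intro t
    rw [(hvd t).deriv]
    nlinarith [hu'' t, hmax t, hu0 t]
  have hvt₀ : v t₀ = 0 := by simp [hv, hd0]
  have hgmono : MonotoneOn g (Set.Ici t₀) := by
    apply monotoneOn_of_deriv_nonneg (convex_Ici t₀)
      (fun t _ => ((hgd t).differentiableAt).continuousAt.continuousWithinAt)
      (fun t _ => ((hgd t).differentiableAt).differentiableWithinAt)
    intro t ht
    rw [interior_Ici] at ht
    rw [(hgd t).deriv]
    have := hvmono (le_of_lt ht)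
    rw [hvt₀] at this
    exact this
  have hganti : AntitoneOn g (Set.Iic t₀) := by
    apply antitoneOn_of_deriv_nonpos (convex_Iic t₀)
      (fun t _ => ((hgd t).differentiableAt).continuousAt.continuousWithinAt)
      (fun t _ => ((hgd t).differentiableAt).differentiableWithinAt)
    intro t ht
    rw [interior_Iic] at ht
    rw [(hgd t).deriv]
    have := hvmono (le_of_lt ht)
    rw [hvt₀] at this
    exact this
  have hkey : ∀ t, M ≤ u t + c * M / 2 * (t - t₀) ^ 2 := by
    intro t
    have hgt₀ : g t₀ = M := by simp [hg, hM]
    rcases le_total t t₀ with h | h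
    · have := hganti h (Set.mem_Iic.2 le_rfl) h
      rw [hgt₀] at this; exact this
    · have := hgmono (Set.mem_Ici.2 le_rfl) h h
      rw [hgt₀] at this; exact this
  -- window radius
  set r : ℝ := 1 / (2 * (c + 8)) with hr
  have hc8 : (0:ℝ) < c + 8 := by linarith
  have hrpos : 0 < r := by positivity
  have hrd : r * (2 * (c + 8)) = 1 := by
    rw [hr]
    field_simp
  have hrle : r ≤ 1 / 16 := by
    rw [hr, div_le_div_iff₀ (by linarith) (by norm_num)]
    linarith
  have h2r : 2 * r ≤ 1 := by linarith
  -- integral of the lower bound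
  have hint : ∀ a b : ℝ, IntervalIntegrable u MeasureTheory.volume a b :=
    fun a b => hcont.intervalIntegrable a b
  have hpolyint : IntervalIntegrable (fun t => M - c * M / 2 * (t - t₀) ^ 2)
      MeasureTheory.volume (t₀ - r) (t₀ + r) := by
    apply Continuous.intervalIntegrable
    fun_prop
  have step1 : (∫ t in (t₀ - r)..(t₀ + r), (M - c * M / 2 * (t - t₀) ^ 2))
      ≤ ∫ t in (t₀ - r)..(t₀ + r), u t := by
    apply intervalIntegral.integral_mono_on (by linarith) hpolyint (hint _ _)
    intro t _
    have := hkey t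
    linarith
  have step2 : (∫ t in (t₀ - r)..(t₀ + r), (M - c * M / 2 * (t - t₀) ^ 2))
      = 2 * r * M - c * M * r ^ 3 / 3 := by
    have hsub : (∫ t in (t₀ - r)..(t₀ + r), (t - t₀) ^ 2)
        = ∫ s in (t₀ - r - t₀)..(t₀ + r - t₀), s ^ 2 :=
      intervalIntegral.integral_comp_sub_right (fun s => s ^ 2) t₀
    have hval : (∫ s in (-r : ℝ)..r, s ^ 2) = (r ^ 3 - (-r) ^ 3) / 3 := by
      rw [integral_pow]
      norm_num
    rw [intervalIntegral.integral_sub intervalIntegrable_const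
      (by apply Continuous.intervalIntegrable; fun_prop),
      intervalIntegral.integral_const,
      intervalIntegral.integral_const_mul, hsub]
    have e1 : t₀ - r - t₀ = -r := by ring
    have e2 : t₀ + r - t₀ = r := by ring
    rw [e1, e2, hval]
    simp only [smul_eq_mul]
    ring
  have step3 : (∫ t in (t₀ - r)..(t₀ + r), u t)
      ≤ ∫ t in (t₀ - r)..(t₀ - r + 1), u t := by
    apply intervalIntegral.integral_mono_interval le_rfl (by linarith) (by linarith)
      (MeasureTheory.ae_of_all _ hu0) (hint _ _)
  have step4 : (∫ t in (t₀ - r)..(t₀ - r + 1), u t) = ∫ t in (0:ℝ)..1, u t := by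
    have := hper.intervalIntegral_add_eq (t₀ - r) 0
    simpa using this
  set I : ℝ := ∫ t in (0:ℝ)..1, u t with hI
  have hmain : 2 * r * M - c * M * r ^ 3 / 3 ≤ I := by
    rw [← step2, ← step4]
    exact step1.trans step3
  have hcr2 : c * r ^ 2 ≤ 1 / 32 := by
    have h1 : (c + 8) * r ^ 2 = r / 2 := by
      have : (c + 8) * r = 1 / 2 := by linarith [hrd]
      nlinarith [this]
    nlinarith [sq_nonneg r, hrpos]
  have hrM : r * M ≤ I := by
    nlinarith [mul_nonneg (mul_nonneg hrpos.le hM0) hrpos.le, hcr2,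
      mul_nonneg hrpos.le hM0]
  have hI0 : 0 ≤ I := le_trans (mul_nonneg hrpos.le hM0) hrM
  have hfinal : M ≤ 4 * (c + 8) * I := by
    have h1 : M = (r * M) * (2 * (c + 8)) := by
      rw [mul_comm (r * M), ← mul_assoc]
      rw [mul_comm (2 * (c + 8)) r, hrd, one_mul]
    rw [h1]
    calc (r * M) * (2 * (c + 8)) ≤ I * (2 * (c + 8)) := by
          apply mul_le_mul_of_nonneg_right hrM (by linarith)
      _ ≤ 4 * (c + 8) * I := by nlinarith
  exact ciSup_le fun t => (hmax t).trans hfinal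
end

section
/- Let H be a real Hilbert space, let p ∈ ℝ with p ≥ 2, and let ξ : ℝ → H be twice continuously differentiable, 1-periodic (ξ(t+1) = ξ(t) for all t), and nowhere vanishing (ξ(t) ≠ 0 for all t). Then ∫_0^1 ‖ξ(t)‖^{p-2}·‖ξ'(t)‖² dt ≤ ( ∫_0^1 ‖ξ(t)‖^p dt )^{(p-1)/p} · ( ∫_0^1 ‖ξ''(t)‖^p dt )^{1/p}. -/
open scoped RealInnerProductSpace
open MeasureTheory intervalIntegral

/-- Hölder-type estimate for a nowhere vanishing smooth periodic curve `ξ` in a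
real Hilbert space:
`∫_0^1 ‖ξ‖^{p-2}‖ξ'‖² ≤ (∫_0^1 ‖ξ‖^p)^{(p-1)/p} · (∫_0^1 ‖ξ''‖^p)^{1/p}`. -/
theorem periodic_lp_derivative_estimate
    {H : Type*} [NormedAddCommGroup H] [InnerProductSpace ℝ H]
    (p : ℝ) (hp : 2 ≤ p) (ξ : ℝ → H)
    (hξ : ContDiff ℝ 2 ξ) (hper : Function.Periodic ξ 1)
    (hne : ∀ t, ξ t ≠ 0) :
    (∫ t in (0 : ℝ)..1, ‖ξ t‖ ^ (p - 2) * ‖deriv ξ t‖ ^ 2) ≤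
      (∫ t in (0 : ℝ)..1, ‖ξ t‖ ^ p) ^ ((p - 1) / p) *
        (∫ t in (0 : ℝ)..1, ‖deriv (deriv ξ) t‖ ^ p) ^ (1 / p) := by
  have hp1 : (1:ℝ) < p := lt_of_lt_of_le one_lt_two hp
  have hp0 : (0:ℝ) < p := by linarith
  have hpm1 : (0:ℝ) < p - 1 := by linarith
  -- regularity
  have hdiff : Differentiable ℝ ξ := hξ.differentiable (by norm_num)
  have hd1 : ∀ t, HasDerivAt ξ (deriv ξ t) t := fun t => (hdiff t).hasDerivAt
  have hc1' : ContDiff ℝ 1 (deriv ξ) := by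
    have h2 : ContDiff ℝ ((1:ℕ) + 1) ξ := by exact_mod_cast hξ
    exact (contDiff_succ_iff_deriv.mp h2).2.2
  have hd1' : Differentiable ℝ (deriv ξ) := hc1'.differentiable one_ne_zero
  have hd2 : ∀ t, HasDerivAt (deriv ξ) (deriv (deriv ξ) t) t := fun t => (hd1' t).hasDerivAt
  have hc0 : Continuous ξ := hξ.continuous
  have hcd1 : Continuous (deriv ξ) := hc1'.continuous
  have hcd2 : Continuous (deriv (deriv ξ)) := hc1'.continuous_deriv le_rfl
  -- the squared norm function
  set r : ℝ → ℝ := fun t => ⟪ξ t, ξ t⟫ with hrdef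
  have hnormpos : ∀ t, 0 < ‖ξ t‖ := fun t => norm_pos_iff.mpr (hne t)
  have hrpos : ∀ t, 0 < r t := fun t => by
    simp only [hrdef, real_inner_self_eq_norm_sq]
    exact pow_pos (hnormpos t) 2
  have hrc : Continuous r := hc0.inner hc0
  have hrnorm : ∀ (t : ℝ) (β : ℝ), r t ^ (β/2) = ‖ξ t‖ ^ β := by
    intro t β
    rw [hrdef]
    simp only [real_inner_self_eq_norm_sq]
    rw [← Real.rpow_natCast ‖ξ t‖ 2, ← Real.rpow_mul (norm_nonneg _)]
    congr 1
    push_cast; ring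
  -- continuity of auxiliary functions
  have hcA : ∀ β : ℝ, Continuous fun t => r t ^ β :=
    fun β => hrc.rpow_const (fun t => Or.inl (hrpos t).ne')
  have hc01 : Continuous fun t => ⟪ξ t, deriv ξ t⟫ := hc0.inner hcd1
  have hc02 : Continuous fun t => ⟪ξ t, deriv (deriv ξ) t⟫ := hc0.inner hcd2
  -- the three pieces of the derivative of g = r^{(p-2)/2} ⟪ξ, ξ'⟫
  set A : ℝ → ℝ := fun t => (p-2) * r t ^ ((p-2)/2 - 1) * ⟪ξ t, deriv ξ t⟫^2 with hAdef
  set B : ℝ → ℝ := fun t => r t ^ ((p-2)/2) * ‖deriv ξ t‖^2 with hBdef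
  set C : ℝ → ℝ := fun t => r t ^ ((p-2)/2) * ⟪ξ t, deriv (deriv ξ) t⟫ with hCdef
  have hcAc : Continuous A := ((continuous_const.mul (hcA _)).mul (hc01.pow 2))
  have hcBc : Continuous B := (hcA _).mul (hcd1.norm.pow 2)
  have hcCc : Continuous C := (hcA _).mul hc02
  have hiA : IntervalIntegrable A volume 0 1 := hcAc.intervalIntegrable 0 1
  have hiB : IntervalIntegrable B volume 0 1 := hcBc.intervalIntegrable 0 1
  have hiC : IntervalIntegrable C volume 0 1 := hcCc.intervalIntegrable 0 1
  -- derivative computation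
  have hG : ∀ t : ℝ, HasDerivAt (fun s => r s ^ ((p-2)/2) * ⟪ξ s, deriv ξ s⟫)
      (A t + B t + C t) t := by
    intro t
    have h1 : HasDerivAt r (⟪ξ t, deriv ξ t⟫ + ⟪deriv ξ t, ξ t⟫) t := (hd1 t).inner ℝ (hd1 t)
    have h2 : HasDerivAt (fun s => r s ^ ((p-2)/2))
        ((⟪ξ t, deriv ξ t⟫ + ⟪deriv ξ t, ξ t⟫) * ((p-2)/2) * r t ^ ((p-2)/2 - 1)) t :=
      h1.rpow_const (Or.inl (hrpos t).ne')
    have h3 : HasDerivAt (fun s => ⟪ξ s, deriv ξ s⟫)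
        (⟪ξ t, deriv (deriv ξ) t⟫ + ⟪deriv ξ t, deriv ξ t⟫) t := (hd1 t).inner ℝ (hd2 t)
    have := h2.mul h3
    refine this.congr_deriv ?_
    rw [hAdef, hBdef, hCdef]
    simp only [real_inner_comm (deriv ξ t) (ξ t), real_inner_self_eq_norm_sq]
    ring
  -- integral of the derivative vanishes by periodicity
  have hper1 : ξ 1 = ξ 0 := by simpa using hper 0
  have hper2 : deriv ξ 1 = deriv ξ 0 := by
    have hfun : (fun s => ξ (s + 1)) = ξ := funext hper
    calc deriv ξ 1 = deriv (fun s => ξ (s+1)) 0 := by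
          rw [deriv_comp_add_const]; norm_num
      _ = deriv ξ 0 := by rw [hfun]
  have hzero : (∫ t in (0:ℝ)..1, (A t + B t + C t)) = 0 := by
    rw [intervalIntegral.integral_eq_sub_of_hasDerivAt (fun t _ => hG t)
      (((hcAc.add hcBc).add hcCc).intervalIntegrable 0 1)]
    simp [hper1, hper2, hrdef]
  have hsplit : (∫ t in (0:ℝ)..1, (A t + B t)) + (∫ t in (0:ℝ)..1, C t) = 0 := by
    rw [← intervalIntegral.integral_add (hiA.add hiB) hiC]
    simpa using hzero
  -- step 1 : ∫ B ≤ ∫ (A + B)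
  have hstep1 : (∫ t in (0:ℝ)..1, B t) ≤ ∫ t in (0:ℝ)..1, (A t + B t) := by
    apply intervalIntegral.integral_mono_on zero_le_one hiB (hiA.add hiB)
    intro t _
    have hA0 : 0 ≤ A t := by
      apply mul_nonneg (mul_nonneg (by linarith) (Real.rpow_nonneg (hrpos t).le _))
      positivity
    linarith
  -- step 2 : ∫ (A + B) = -∫ C ≤ ∫ ‖ξ‖^{p-1} ‖ξ''‖
  have hstep2 : (∫ t in (0:ℝ)..1, (A t + B t)) ≤
      ∫ t in (0:ℝ)..1, ‖ξ t‖ ^ (p-1) * ‖deriv (deriv ξ) t‖ := by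
    have h1 : (∫ t in (0:ℝ)..1, (A t + B t)) = ∫ t in (0:ℝ)..1, (- C t) := by
      rw [intervalIntegral.integral_neg]; linarith
    rw [h1]
    apply intervalIntegral.integral_mono_on zero_le_one hiC.neg
      ((((hc0.norm.rpow_const (fun t => Or.inr (by linarith))).mul
        hcd2.norm)).intervalIntegrable 0 1)
    intro t _
    rw [hCdef]
    have hcs : -⟪ξ t, deriv (deriv ξ) t⟫ ≤ ‖ξ t‖ * ‖deriv (deriv ξ) t‖ := by
      have := abs_real_inner_le_norm (ξ t) (deriv (deriv ξ) t)
      have := neg_abs_le ⟪ξ t, deriv (deriv ξ) t⟫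
      linarith
    have hr0 : (0:ℝ) ≤ r t ^ ((p-2)/2) := Real.rpow_nonneg (hrpos t).le _
    calc -(r t ^ ((p-2)/2) * ⟪ξ t, deriv (deriv ξ) t⟫)
        = r t ^ ((p-2)/2) * (-⟪ξ t, deriv (deriv ξ) t⟫) := by ring
      _ ≤ r t ^ ((p-2)/2) * (‖ξ t‖ * ‖deriv (deriv ξ) t‖) := by
          exact mul_le_mul_of_nonneg_left hcs hr0
      _ = ‖ξ t‖ ^ (p-1) * ‖deriv (deriv ξ) t‖ := by
          rw [hrnorm t (p-2)]
          rw [show ‖ξ t‖ ^ (p-2) * (‖ξ t‖ * ‖deriv (deriv ξ) t‖)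
              = (‖ξ t‖ ^ (p-2) * ‖ξ t‖ ^ (1:ℝ)) * ‖deriv (deriv ξ) t‖ by
            rw [Real.rpow_one]; ring]
          rw [← Real.rpow_add (hnormpos t), show p - 2 + 1 = p - 1 by ring]
  -- step 3 : Hölder
  have hstep3 : (∫ t in (0:ℝ)..1, ‖ξ t‖ ^ (p-1) * ‖deriv (deriv ξ) t‖) ≤
      (∫ t in (0:ℝ)..1, ‖ξ t‖ ^ p) ^ ((p - 1) / p) *
        (∫ t in (0:ℝ)..1, ‖deriv (deriv ξ) t‖ ^ p) ^ (1 / p) := by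
    rw [intervalIntegral.integral_of_le zero_le_one,
        intervalIntegral.integral_of_le zero_le_one,
        intervalIntegral.integral_of_le zero_le_one]
    set μ := volume.restrict (Set.Ioc (0:ℝ) 1) with hμ
    haveI : IsFiniteMeasure μ := by
      constructor
      rw [hμ, Measure.restrict_apply MeasurableSet.univ, Set.univ_inter, Real.volume_Ioc]
      norm_num
    set q : ℝ := p / (p - 1) with hq
    have hpq : q.HolderConjugate p :=
      (Real.HolderConjugate.conjExponent hp1).symm
    set f : ℝ → ℝ := fun t => ‖ξ t‖ ^ (p-1) with hf
    set g : ℝ → ℝ := fun t => ‖deriv (deriv ξ) t‖ with hg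
    have hfc : Continuous f := hc0.norm.rpow_const (fun t => Or.inr (by linarith))
    have hgc : Continuous g := hcd2.norm
    have hmem : ∀ (h : ℝ → ℝ), Continuous h → ∀ e : ENNReal, MemLp h e μ := by
      intro h hc e
      obtain ⟨Cb, hCb⟩ := (isCompact_Icc (a := (0:ℝ)) (b := 1)).exists_bound_of_continuousOn
        hc.continuousOn
      apply MemLp.of_bound hc.aestronglyMeasurable Cb
      rw [hμ, ae_restrict_iff' measurableSet_Ioc]
      filter_upwards with t ht
      exact hCb t (Set.Ioc_subset_Icc_self ht)
    have key := MeasureTheory.integral_mul_le_Lp_mul_Lq_of_nonneg hpq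
      (f := f) (g := g)
      (Filter.Eventually.of_forall fun t => Real.rpow_nonneg (norm_nonneg _) _)
      (Filter.Eventually.of_forall fun t => norm_nonneg _)
      (hmem f hfc _) (hmem g hgc _)
    have hfq : ∀ t, f t ^ q = ‖ξ t‖ ^ p := by
      intro t
      rw [hf, ← Real.rpow_mul (norm_nonneg _)]
      congr 1
      rw [hq]; field_simp
    have h1q : 1 / q = (p-1)/p := by rw [hq, one_div_div]
    calc ∫ t in Set.Ioc (0:ℝ) 1, ‖ξ t‖ ^ (p-1) * ‖deriv (deriv ξ) t‖
        = ∫ a, f a * g a ∂μ := by rw [hμ]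
      _ ≤ (∫ a, f a ^ q ∂μ) ^ (1/q) * (∫ a, g a ^ p ∂μ) ^ (1/p) := key
      _ = (∫ t in Set.Ioc (0:ℝ) 1, ‖ξ t‖ ^ p) ^ ((p-1)/p) *
            (∫ t in Set.Ioc (0:ℝ) 1, ‖deriv (deriv ξ) t‖ ^ p) ^ (1/p) := by
          rw [h1q, hμ]
          congr 1
          congr 1
          exact integral_congr_ae (Filter.Eventually.of_forall fun t => hfq t)
  -- put everything together
  have hLHS : (∫ t in (0 : ℝ)..1, ‖ξ t‖ ^ (p - 2) * ‖deriv ξ t‖ ^ 2)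
      = ∫ t in (0:ℝ)..1, B t := by
    apply intervalIntegral.integral_congr
    intro t _
    simp only [hBdef]
    rw [hrnorm t (p-2)]
  rw [hLHS]
  calc (∫ t in (0:ℝ)..1, B t) ≤ ∫ t in (0:ℝ)..1, (A t + B t) := hstep1
    _ ≤ ∫ t in (0:ℝ)..1, ‖ξ t‖ ^ (p-1) * ‖deriv (deriv ξ) t‖ := hstep2
    _ ≤ _ := hstep3
end
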